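/- Let 𝒫₀ and 𝒫₁ be classes of probability measures on a measurable space X, let (P₀*, P₁*) ∈ 𝒫₀ × 𝒫₁ satisfy the stochastic-dominance property, and let 𝒞 be an arbitrary set of measurable functions X → [0,∞) (the structural constraint); for a set H of probability measures define ℰ′(H) = { E ∈ 𝒞 : ∫ E dP ≤ 1 for all P ∈ H }. Suppose E* ∈ ℰ′({P₀*}) maximizes E ↦ E_{P₁*}[log E] over ℰ′({P₀*}) and that E* = ψ(L*) for some nondecreasing measurable ψ : [0,∞) → [0,∞). Then E* ∈ ℰ′(𝒫₀), and sup over E ∈ ℰ′(𝒫₀) of inf over P₁ ∈ 𝒫₁ of E_{P₁}[log E] equals inf over P₁ ∈ 𝒫₁ of E_{P₁}[log E*], which equals E_{P₁*}[log E*] (expectations in the extended reals). -/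
import Mathlib


open MeasureTheory Real Set
open scoped ENNReal

set_option maxHeartbeats 1000000
noncomputable section

attribute [local instance] Classical.propDecidable

/-- Nonnegative part of an extended real, as an extended nonnegative real. -/
def eToENN (x : EReal) : ℝ≥0∞ := if x = ⊤ then ⊤ else ENNReal.ofReal x.toReal

/-- Integral of an extended-real-valued function, with values in the extended reals. -/
def eintE {Y : Type*} [MeasurableSpace Y] (μ : Measure Y) (f : Y → EReal) : EReal :=
  ((∫⁻ y, eToENN (f y) ∂μ : ℝ≥0∞) : EReal) - ((∫⁻ y, eToENN (-(f y)) ∂μ : ℝ≥0∞) : EReal)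

/-- Extended-real logarithm, with `log x = -∞` for `x ≤ 0`. -/
def elog (x : ℝ) : EReal := if x ≤ 0 then ⊥ else ((Real.log x : ℝ) : EReal)

lemma elog_monotone : Monotone elog := by
  intro x y h
  unfold elog
  split_ifs with hx hy hy
  · exact le_refl _
  · exact bot_le
  · exact absurd (h.trans hy) hx
  · exact EReal.coe_le_coe_iff.mpr (Real.log_le_log (lt_of_not_ge hx) h)

lemma elog_measurable : Measurable elog := by
  unfold elog
  exact Measurable.ite measurableSet_Iic measurable_const
    (measurable_coe_real_ereal.comp Real.measurable_log)

lemma eToENN_coe (r : ℝ) : eToENN ((r : ℝ) : EReal) = ENNReal.ofReal r := by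
  simp [eToENN]

lemma eToENN_neg_coe (r : ℝ) (hr : 0 ≤ r) : eToENN (-((r : ℝ) : EReal)) = 0 := by
  rw [← EReal.coe_neg, eToENN_coe]
  exact ENNReal.ofReal_eq_zero.mpr (by linarith)

lemma eintE_nonneg_eq {Y : Type*} [MeasurableSpace Y] (μ : Measure Y) (g : Y → ℝ)
    (hg : ∀ y, 0 ≤ g y) :
    eintE μ (fun y => ((g y : ℝ) : EReal)) = ((∫⁻ y, ENNReal.ofReal (g y) ∂μ : ℝ≥0∞) : EReal) := by
  unfold eintE
  have h1 : (fun y => eToENN ((g y : ℝ) : EReal)) = fun y => ENNReal.ofReal (g y) := by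
    funext y; exact eToENN_coe _
  have h2 : (fun y => eToENN (-((g y : ℝ) : EReal))) = fun _ => (0 : ℝ≥0∞) := by
    funext y; exact eToENN_neg_coe _ (hg y)
  rw [h1, h2, lintegral_zero]
  simp

/-- If the constrained simple-vs-simple optimizer `E*` for the LFD pair
`(P₀*, P₁*)` is a nondecreasing transform of the likelihood ratio, then it is a valid
constrained e-variable for the full composite null, and it is GROW for the composite
problem. -/
theorem composite_lifting_log
    {X : Type*} [MeasurableSpace X]
    (𝒫₀ 𝒫₁ : Set (Measure X))
    (h𝒫₀ : ∀ P ∈ 𝒫₀, IsProbabilityMeasure P) (h𝒫₁ : ∀ P ∈ 𝒫₁, IsProbabilityMeasure P)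
    (Pstar₀ Pstar₁ : Measure X) (hmem₀ : Pstar₀ ∈ 𝒫₀) (hmem₁ : Pstar₁ ∈ 𝒫₁)
    [IsProbabilityMeasure Pstar₀] [IsProbabilityMeasure Pstar₁]
    (hac : Pstar₁ ≪ Pstar₀)
    (Lstar : X → ℝ) (hL : Lstar = fun x => (Pstar₁.rnDeriv Pstar₀ x).toReal)
    -- stochastic-dominance property of the LFD pair
    (hSD₀ : ∀ f : ℝ → EReal, Measurable f → MonotoneOn f (Set.Ici 0) →
      ∀ P₀ ∈ 𝒫₀, eintE P₀ (fun x => f (Lstar x)) ≤ eintE Pstar₀ (fun x => f (Lstar x)))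
    (hSD₁ : ∀ f : ℝ → EReal, Measurable f → MonotoneOn f (Set.Ici 0) →
      ∀ P₁ ∈ 𝒫₁, eintE Pstar₁ (fun x => f (Lstar x)) ≤ eintE P₁ (fun x => f (Lstar x)))
    -- the structural constraint class
    (𝒞 : Set (X → ℝ)) (h𝒞 : ∀ E ∈ 𝒞, Measurable E ∧ ∀ x, 0 ≤ E x)
    -- the simple-vs-simple optimizer and its monotone representation
    (Estar : X → ℝ) (hE𝒞 : Estar ∈ 𝒞)
    (hEvalid : (∫⁻ x, ENNReal.ofReal (Estar x) ∂Pstar₀) ≤ 1)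
    (hEopt : ∀ E ∈ 𝒞, (∫⁻ x, ENNReal.ofReal (E x) ∂Pstar₀) ≤ 1 →
      eintE Pstar₁ (fun x => elog (E x)) ≤ eintE Pstar₁ (fun x => elog (Estar x)))
    (ψ : ℝ → ℝ) (hψmono : MonotoneOn ψ (Set.Ici 0)) (hψmeas : Measurable ψ)
    (hψnonneg : ∀ y : ℝ, 0 ≤ y → 0 ≤ ψ y)
    (hrep : ∀ x, Estar x = ψ (Lstar x)) :
    (∀ P₀ ∈ 𝒫₀, (∫⁻ x, ENNReal.ofReal (Estar x) ∂P₀) ≤ 1) ∧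
      (⨆ E ∈ {E : X → ℝ | E ∈ 𝒞 ∧ ∀ P₀ ∈ 𝒫₀, (∫⁻ x, ENNReal.ofReal (E x) ∂P₀) ≤ 1},
          ⨅ P₁ ∈ 𝒫₁, eintE P₁ (fun x => elog (E x))) =
        (⨅ P₁ ∈ 𝒫₁, eintE P₁ (fun x => elog (Estar x))) ∧
      (⨅ P₁ ∈ 𝒫₁, eintE P₁ (fun x => elog (Estar x))) =
        eintE Pstar₁ (fun x => elog (Estar x)) := by
  have hLnn : ∀ x, 0 ≤ Lstar x := by
    intro x; rw [hL]; exact ENNReal.toReal_nonneg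
  -- Part 1: validity for the whole composite null
  have part1 : ∀ P₀ ∈ 𝒫₀, (∫⁻ x, ENNReal.ofReal (Estar x) ∂P₀) ≤ 1 := by
    intro P₀ hP₀
    have hf : Measurable (fun y : ℝ => ((ψ y : ℝ) : EReal)) :=
      measurable_coe_real_ereal.comp hψmeas
    have hmono : MonotoneOn (fun y : ℝ => ((ψ y : ℝ) : EReal)) (Set.Ici 0) := by
      intro a ha b hb hab
      exact EReal.coe_le_coe_iff.mpr (hψmono ha hb hab)
    have hkey := hSD₀ _ hf hmono P₀ hP₀
    rw [eintE_nonneg_eq P₀ (fun x => ψ (Lstar x)) (fun x => hψnonneg _ (hLnn x)),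
        eintE_nonneg_eq Pstar₀ (fun x => ψ (Lstar x)) (fun x => hψnonneg _ (hLnn x))] at hkey
    have h' := EReal.coe_ennreal_le_coe_ennreal_iff.mp hkey
    simp only [hrep] at hEvalid ⊢
    exact h'.trans hEvalid
  -- Part 3: the inf over the composite alternative is attained at Pstar₁
  have hg : Measurable (fun y : ℝ => elog (ψ y)) := elog_measurable.comp hψmeas
  have hgmono : MonotoneOn (fun y : ℝ => elog (ψ y)) (Set.Ici 0) :=
    fun a ha b hb hab => elog_monotone (hψmono ha hb hab)
  have part3 : (⨅ P₁ ∈ 𝒫₁, eintE P₁ (fun x => elog (Estar x))) =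
      eintE Pstar₁ (fun x => elog (Estar x)) := by
    apply le_antisymm
    · exact iInf₂_le Pstar₁ hmem₁
    · apply le_iInf₂
      intro P₁ hP₁
      have hkey := hSD₁ _ hg hgmono P₁ hP₁
      simpa only [hrep] using hkey
  -- Part 2: the saddle-point equality
  have part2 : (⨆ E ∈ {E : X → ℝ | E ∈ 𝒞 ∧ ∀ P₀ ∈ 𝒫₀, (∫⁻ x, ENNReal.ofReal (E x) ∂P₀) ≤ 1},
      ⨅ P₁ ∈ 𝒫₁, eintE P₁ (fun x => elog (E x))) =
      (⨅ P₁ ∈ 𝒫₁, eintE P₁ (fun x => elog (Estar x))) := by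
    apply le_antisymm
    · apply iSup₂_le
      intro E hE
      calc (⨅ P₁ ∈ 𝒫₁, eintE P₁ (fun x => elog (E x)))
          ≤ eintE Pstar₁ (fun x => elog (E x)) := iInf₂_le Pstar₁ hmem₁
        _ ≤ eintE Pstar₁ (fun x => elog (Estar x)) := hEopt E hE.1 (hE.2 Pstar₀ hmem₀)
        _ = _ := part3.symm
    · exact le_iSup₂_of_le Estar ⟨hE𝒞, part1⟩ le_rfl
  exact ⟨part1, part2, part3⟩
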